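/- Let σ > 0, α ∈ ℂ with α ≠ 0, and v, v̇ ∈ ℂ^n with v ≠ 0 and v̇ ∉ ℂ·v (i.e., v̇ is not a complex scalar multiple of v). Define the 3×3 real symmetric matrix F by F_{ij} = (2/σ²) Re{d_i^H d_j} for i, j ∈ {1, 2, 3}, where d₁ = α v̇, d₂ = v, d₃ = i v. Then F is invertible and [F⁻¹]₁₁ = σ² / (2|α|² (‖v̇‖² − |v^H v̇|²/‖v‖²)). -/

import Mathlib

set_option maxHeartbeats 1000000


open Matrix

/-- Cramer-Rao bound (Theorem 2): with `d₁ = α v̇`, `d₂ = v`, `d₃ = i v`,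
`F_{ij} = (2/σ²) Re{d_i^H d_j}`, if `α ≠ 0`, `v ≠ 0`, and `v̇` is not a complex multiple of `v`,
then `F` is invertible and `[F⁻¹]₁₁ = σ² / (2|α|²(‖v̇‖² − |v^H v̇|²/‖v‖²))`. -/
theorem stmt_14 (n : ℕ) (σ : ℝ) (hσ : 0 < σ) (α : ℂ) (hα : α ≠ 0)
    (v vdot : EuclideanSpace ℂ (Fin n)) (hv : v ≠ 0)
    (hlin : ∀ z : ℂ, vdot ≠ z • v)
    (d : Fin 3 → EuclideanSpace ℂ (Fin n))
    (hd : d = ![α • vdot, v, Complex.I • v])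
    (F : Matrix (Fin 3) (Fin 3) ℝ)
    (hF : ∀ i j, F i j = 2 / σ ^ 2 * (inner ℂ (d i) (d j) : ℂ).re) :
    IsUnit F ∧
    F⁻¹ 0 0 = σ ^ 2 / (2 * ‖α‖ ^ 2 * (‖vdot‖ ^ 2 - ‖(inner ℂ v vdot : ℂ)‖ ^ 2 / ‖v‖ ^ 2)) := by
  have hvd : vdot ≠ 0 := by
    intro h; exact hlin 0 (by simp [h])
  have hαpos : 0 < ‖α‖ := norm_pos_iff.2 hα
  have hvpos : 0 < ‖v‖ := norm_pos_iff.2 hv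
  set c : ℝ := 2 / σ ^ 2 with hc
  have hcpos : 0 < c := by rw [hc]; positivity
  set p : ℂ := inner ℂ v vdot with hp
  set a : ℂ := α * p with ha
  set A : ℝ := ‖α‖ ^ 2 * ‖vdot‖ ^ 2 with hA
  set B : ℝ := ‖v‖ ^ 2 with hB
  have hBpos : 0 < B := by rw [hB]; positivity
  -- strict Cauchy-Schwarz
  have hCS : ‖p‖ ^ 2 < ‖v‖ ^ 2 * ‖vdot‖ ^ 2 := by
    have h1 : ‖p‖ ≤ ‖v‖ * ‖vdot‖ := norm_inner_le_norm v vdot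
    have h2 : ‖p‖ ≠ ‖v‖ * ‖vdot‖ := by
      intro h
      rcases (norm_inner_eq_norm_iff hv hvd).1 h with ⟨r, _, hr⟩
      exact hlin r hr
    have h3 : ‖p‖ < ‖v‖ * ‖vdot‖ := lt_of_le_of_ne h1 h2
    calc ‖p‖ ^ 2 < (‖v‖ * ‖vdot‖) ^ 2 := by
          apply pow_lt_pow_left₀ h3 (norm_nonneg _) (by norm_num)
      _ = ‖v‖ ^ 2 * ‖vdot‖ ^ 2 := by ring
  -- inner product identities
  have i00 : (inner ℂ (d 0) (d 0) : ℂ) = ((‖α‖ * ‖vdot‖ : ℝ) : ℂ) ^ 2 := by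
    rw [hd]
    show (inner ℂ (α • vdot) (α • vdot) : ℂ) = _
    rw [inner_self_eq_norm_sq_to_K, norm_smul]
    norm_cast
  have i01 : (inner ℂ (d 0) (d 1) : ℂ) = (starRingEnd ℂ) a := by
    rw [hd]
    show (inner ℂ (α • vdot) v : ℂ) = _
    rw [ha, hp, inner_smul_left, ← inner_conj_symm vdot v, _root_.map_mul]
  have i02 : (inner ℂ (d 0) (d 2) : ℂ) = Complex.I * (starRingEnd ℂ) a := by
    rw [hd]
    show (inner ℂ (α • vdot) (Complex.I • v) : ℂ) = _
    rw [ha, hp, inner_smul_left, inner_smul_right, ← inner_conj_symm vdot v,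
      _root_.map_mul]
    ring
  have i10 : (inner ℂ (d 1) (d 0) : ℂ) = a := by
    rw [hd]
    show (inner ℂ v (α • vdot) : ℂ) = _
    rw [ha, hp, inner_smul_right]
  have i11 : (inner ℂ (d 1) (d 1) : ℂ) = ((‖v‖ : ℝ) : ℂ) ^ 2 := by
    rw [hd]
    show (inner ℂ v v : ℂ) = _
    rw [inner_self_eq_norm_sq_to_K]
    norm_cast
  have i12 : (inner ℂ (d 1) (d 2) : ℂ) = Complex.I * ((‖v‖ : ℝ) : ℂ) ^ 2 := by
    rw [hd]
    show (inner ℂ v (Complex.I • v) : ℂ) = _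
    rw [inner_smul_right, inner_self_eq_norm_sq_to_K]
    norm_cast
  have i20 : (inner ℂ (d 2) (d 0) : ℂ) = -Complex.I * a := by
    rw [hd]
    show (inner ℂ (Complex.I • v) (α • vdot) : ℂ) = _
    rw [ha, hp, inner_smul_left, inner_smul_right]
    simp [Complex.conj_I]
  have i21 : (inner ℂ (d 2) (d 1) : ℂ) = -Complex.I * ((‖v‖ : ℝ) : ℂ) ^ 2 := by
    rw [hd]
    show (inner ℂ (Complex.I • v) v : ℂ) = _
    rw [inner_smul_left, inner_self_eq_norm_sq_to_K]
    simp [Complex.conj_I]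
  have i22 : (inner ℂ (d 2) (d 2) : ℂ) = ((‖v‖ : ℝ) : ℂ) ^ 2 := by
    rw [hd]
    show (inner ℂ (Complex.I • v) (Complex.I • v) : ℂ) = _
    rw [inner_self_eq_norm_sq_to_K, norm_smul]
    norm_num
  have hF' : F = !![c*A, c*a.re, c*a.im; c*a.re, c*B, 0; c*a.im, 0, c*B] := by
    ext i j
    fin_cases i <;> fin_cases j <;>
      simp [hF, i00, i01, i02, i10, i11, i12, i20, i21, i22,
        Complex.mul_re, Complex.mul_im, ← Complex.ofReal_pow, hA, hB, mul_pow] <;>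
      simp [hd, norm_smul, mul_pow]
  have hnormsq : a.re ^ 2 + a.im ^ 2 = ‖α‖ ^ 2 * ‖p‖ ^ 2 := by
    have h1 : Complex.normSq a = Complex.normSq α * Complex.normSq p := by
      rw [ha, Complex.normSq_mul]
    have h2 : a.re ^ 2 + a.im ^ 2 = Complex.normSq a := by
      rw [Complex.normSq_apply]; ring
    rw [h2, h1]
    simp [Complex.normSq_eq_norm_sq]
  have hdet : F.det = c ^ 3 * B * (A * B - (a.re ^ 2 + a.im ^ 2)) := by
    rw [hF', Matrix.det_fin_three]
    simp
    ring
  have hkey : 0 < A * B - (a.re ^ 2 + a.im ^ 2) := by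
    rw [hnormsq, hA, hB]
    nlinarith [mul_lt_mul_of_pos_left hCS (pow_pos hαpos 2)]
  have hdetpos : 0 < F.det := by
    rw [hdet]; exact mul_pos (mul_pos (pow_pos hcpos 3) hBpos) hkey
  have hunit : IsUnit F := by
    rw [Matrix.isUnit_iff_isUnit_det]
    exact isUnit_iff_ne_zero.2 hdetpos.ne'
  refine ⟨hunit, ?_⟩
  have hadj : F.adjugate 0 0 = c * B * (c * B) := by
    rw [hF', Matrix.adjugate_fin_three]
    norm_num
    show c * B * (c * B) - 0 * 0 = c * B * (c * B)
    ring
  have hinv : F⁻¹ 0 0 = F.det⁻¹ * F.adjugate 0 0 := by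
    rw [Matrix.inv_def]
    simp [Ring.inverse_eq_inv', Matrix.smul_apply]
  have hdet2 : F.det = c ^ 3 * B * (A * B - ‖α‖ ^ 2 * ‖p‖ ^ 2) := by
    rw [hdet, hnormsq]
  have hkey2 : 0 < A * B - ‖α‖ ^ 2 * ‖p‖ ^ 2 := by rw [← hnormsq]; exact hkey
  rw [hinv, hadj, hdet2]
  have hσ2 : σ ^ 2 ≠ 0 := by positivity
  have hsub : 0 < ‖vdot‖ ^ 2 - ‖p‖ ^ 2 / ‖v‖ ^ 2 := by
    rw [sub_pos, div_lt_iff₀ (by positivity)]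
    nlinarith [hCS]
  have hgen : ∀ x y z : ℝ, x ≠ 0 → y ≠ 0 → z ≠ 0 →
      (x ^ 3 * y * z)⁻¹ * (x * y * (x * y)) = y / (x * z) := by
    intro x y z hx hy hz
    field_simp
  rw [hgen c B (A * B - ‖α‖ ^ 2 * ‖p‖ ^ 2) hcpos.ne' hBpos.ne' hkey2.ne',
    div_eq_div_iff (mul_pos hcpos hkey2).ne'
      (mul_pos (by positivity : (0:ℝ) < 2 * ‖α‖ ^ 2) hsub).ne']
  rw [hA, hB, hc]
  have halg : ∀ s na nv nd np : ℝ, s ≠ 0 → nv ≠ 0 →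
      nv ^ 2 * (2 * na ^ 2 * (nd ^ 2 - np ^ 2 / nv ^ 2)) =
        s ^ 2 * (2 / s ^ 2 * (na ^ 2 * nd ^ 2 * nv ^ 2 - na ^ 2 * np ^ 2)) := by
    intro s na nv nd np hs hnv
    field_simp
  linear_combination halg σ ‖α‖ ‖v‖ ‖vdot‖ ‖p‖ hσ.ne' hvpos.ne'
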